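/- If f : ℝ≥0 × C([-r,0],ℝ^d) → ℝ^d is continuous and quasi-bounded (bounded on ℝ≥0 × B for every bounded B ⊂ C([-r,0],ℝ^d)), and x : [-r, b) → ℝ^d is a noncontinuable (maximal) solution of x'(t) = f(t, x_t), x₀ = φ with b < ∞, then x is unbounded on [-r, b). -/

import Mathlib

open Filter Set intervalIntegral Topology
open scoped BoundedContinuousFunction

namespace Stmt7Aux

noncomputable def segc (r : ℝ) {d : ℕ} (y : C(ℝ, Fin d → ℝ)) :
    C(ℝ, C(Icc (-r) (0:ℝ), Fin d → ℝ)) :=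
  ContinuousMap.curry ⟨fun p : ℝ × Icc (-r) (0:ℝ) => y (p.1 + p.2),
    y.continuous.comp (continuous_fst.add (continuous_subtype_val.comp continuous_snd))⟩

@[simp] lemma segc_apply (r : ℝ) {d : ℕ} (y : C(ℝ, Fin d → ℝ)) (t : ℝ)
    (θ : Icc (-r) (0:ℝ)) : segc r y t θ = y (t + θ) := rfl

lemma norm_segc_le (r : ℝ) {d : ℕ} (y : C(ℝ, Fin d → ℝ)) (R : ℝ) (hR : 0 ≤ R)
    (h : ∀ t, ‖y t‖ ≤ R) (t : ℝ) : ‖segc r y t‖ ≤ R :=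
  (ContinuousMap.norm_le _ hR).2 fun _ => h _

variable {d : ℕ}

/-- Tonelli approximations: for every delay `h > 0` there is a continuous function that
equals `g` on `(-∞, b]`, is bounded by `M+1`, is `K`-Lipschitz on `[b, b+ε]`, and satisfies
the delayed integral equation there. -/
theorem tonelli (r : ℝ) (f : ℝ → C(Icc (-r) (0:ℝ), Fin d → ℝ) → (Fin d → ℝ))
    (hf : Continuous fun p : ℝ × C(Icc (-r) (0:ℝ), Fin d → ℝ) => f p.1 p.2)
    (b ε M K : ℝ) (hε : 0 < ε) (hM : 0 ≤ M) (hK : 0 ≤ K) (hKε : K * ε ≤ 1)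
    (hfK : ∀ s ∈ Icc b (b + ε), ∀ u : C(Icc (-r) (0:ℝ), Fin d → ℝ),
      ‖u‖ ≤ M + 1 → ‖f s u‖ ≤ K)
    (g : C(ℝ, Fin d → ℝ)) (hgM : ∀ t, ‖g t‖ ≤ M)
    (h : ℝ) (hh : 0 < h) :
    ∃ y : C(ℝ, Fin d → ℝ), (∀ t, t ≤ b → y t = g t) ∧ (∀ t, ‖y t‖ ≤ M + 1) ∧
      (∀ t₁ ∈ Icc b (b + ε), ∀ t₂ ∈ Icc b (b + ε), ‖y t₁ - y t₂‖ ≤ K * |t₁ - t₂|) ∧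
      (∀ t ∈ Icc b (b + ε),
        y t = g b + ∫ s in b..(min (max b (t - h)) (b + ε)), f s (segc r y s)) := by
  classical
  set cap : ℝ → ℝ := fun a => min (max b a) (b + ε) with hcap
  have hcap_lb : ∀ a, b ≤ cap a := fun a => le_min (le_max_left _ _) (by linarith)
  have hcap_ub : ∀ a, cap a ≤ b + ε := fun a => min_le_right _ _
  have hcap_lip : LipschitzWith 1 cap := by
    have := (LipschitzWith.id.max_const b).min_const (b + ε)
    simpa [hcap, max_comm] using this
  have hcap_dist : ∀ a a', |cap a - cap a'| ≤ |a - a'| := by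
    intro a a'
    have := hcap_lip.dist_le_mul a a'
    simpa [Real.dist_eq] using this
  have hcap_cont : Continuous cap := hcap_lip.continuous
  have hcap_le_self : ∀ a, b ≤ a → cap a ≤ a := fun a ha =>
    le_trans (min_le_left _ _) (max_le ha le_rfl)
  -- The integrand associated to a candidate `y`.
  have Fcont : ∀ y : C(ℝ, Fin d → ℝ), Continuous fun s => f s (segc r y s) := fun y =>
    hf.comp (continuous_id.prodMk (segc r y).continuous)
  have Fint : ∀ y : C(ℝ, Fin d → ℝ), ∀ a a' : ℝ,
      IntervalIntegrable (fun s => f s (segc r y s)) MeasureTheory.volume a a' := fun y a a' =>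
    (Fcont y).intervalIntegrable a a'
  -- The Tonelli operator with delay h.
  set Φ : C(ℝ, Fin d → ℝ) → C(ℝ, Fin d → ℝ) := fun y =>
    ⟨fun t => if t ≤ b then g t else g b + ∫ s in b..(cap (t - h)), f s (segc r y s),
     by
      refine Continuous.if_le g.continuous
        (continuous_const.add
          ((intervalIntegral.continuous_primitive (Fint y) b).comp
            (hcap_cont.comp (continuous_id.sub continuous_const))))
        continuous_id continuous_const (fun t ht => ?_)
      have hcb : cap (t - h) = b := by
        have h1 : max b (t - h) = b := max_eq_left (by rw [ht]; linarith)
        show min (max b (t - h)) (b + ε) = b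
        rw [h1]
        exact min_eq_left (by linarith)
      rw [hcb, intervalIntegral.integral_same, add_zero, ht]⟩
      with hΦ
  have hΦ_apply : ∀ y t, Φ y t =
      if t ≤ b then g t else g b + ∫ s in b..(cap (t - h)), f s (segc r y s) := fun _ _ => rfl
  -- bound on the integrand
  have hFbound : ∀ y : C(ℝ, Fin d → ℝ), (∀ t, ‖y t‖ ≤ M + 1) →
      ∀ s ∈ Icc b (b + ε), ‖f s (segc r y s)‖ ≤ K := fun y hy s hs =>
    hfK s hs _ (norm_segc_le r y (M + 1) (by linarith) hy s)
  -- basic integral estimate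
  have hIest : ∀ y : C(ℝ, Fin d → ℝ), (∀ t, ‖y t‖ ≤ M + 1) → ∀ c₁ c₂ : ℝ,
      c₁ ∈ Icc b (b + ε) → c₂ ∈ Icc b (b + ε) →
      ‖∫ s in c₁..c₂, f s (segc r y s)‖ ≤ K * |c₂ - c₁| := by
    intro y hy c₁ c₂ hc₁ hc₂
    apply intervalIntegral.norm_integral_le_of_norm_le_const
    intro s hs
    rw [Set.mem_uIoc] at hs
    refine hFbound y hy s ⟨?_, ?_⟩
    · rcases hs with ⟨h1, _⟩ | ⟨h1, _⟩
      · exact le_trans hc₁.1 h1.le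
      · exact le_trans hc₂.1 h1.le
    · rcases hs with ⟨_, h2⟩ | ⟨_, h2⟩
      · exact le_trans h2 hc₂.2
      · exact le_trans h2 hc₁.2
  have hΦ_bound : ∀ y, (∀ t, ‖y t‖ ≤ M + 1) → ∀ t, ‖Φ y t‖ ≤ M + 1 := by
    intro y hy t
    rw [hΦ_apply]
    split_ifs with htb
    · linarith [hgM t]
    · have hc1 : b ≤ cap (t - h) := hcap_lb _
      have hc2 : cap (t - h) ≤ b + ε := hcap_ub _
      have h1 : ‖∫ s in b..(cap (t - h)), f s (segc r y s)‖ ≤ K * |cap (t - h) - b| :=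
        hIest y hy b _ ⟨le_rfl, by linarith⟩ ⟨hc1, hc2⟩
      have h2 : |cap (t - h) - b| ≤ ε := by rw [abs_of_nonneg (by linarith)]; linarith
      have h3 : K * |cap (t - h) - b| ≤ K * ε := mul_le_mul_of_nonneg_left h2 hK
      calc ‖g b + ∫ s in b..(cap (t - h)), f s (segc r y s)‖
          ≤ ‖g b‖ + ‖∫ s in b..(cap (t - h)), f s (segc r y s)‖ := norm_add_le _ _
        _ ≤ M + 1 := by linarith [hgM b]
  -- the iterates
  set z : ℕ → C(ℝ, Fin d → ℝ) := fun k => Φ^[k] g with hz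
  have hz_succ : ∀ k, z (k + 1) = Φ (z k) := fun k => Function.iterate_succ_apply' Φ k g
  have hz_bound : ∀ k t, ‖z k t‖ ≤ M + 1 := by
    intro k
    induction k with
    | zero => intro t; simp only [hz, Function.iterate_zero, id_eq]; linarith [hgM t]
    | succ k IH => intro t; rw [hz_succ]; exact hΦ_bound (z k) IH t
  have hz_prefix : ∀ k t, t ≤ b → z k t = g t := by
    intro k
    induction k with
    | zero => intro t _; simp [hz]
    | succ k _ => intro t ht; rw [hz_succ, hΦ_apply, if_pos ht]
  have hz_stab : ∀ k : ℕ, ∀ t : ℝ, t ≤ b + (k : ℝ) * h → z (k + 1) t = z k t := by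
    intro k
    induction k with
    | zero =>
      intro t ht
      push_cast at ht
      rw [hz_succ, hΦ_apply, if_pos (by linarith)]
      exact (hz_prefix 0 t (by linarith)).symm
    | succ k IH =>
      intro t ht
      push_cast at ht
      rw [hz_succ, hz_succ, hΦ_apply, hΦ_apply]
      split_ifs with htb
      · rfl
      · congr 1
        apply intervalIntegral.integral_congr
        intro s hs
        rw [Set.uIcc_of_le (hcap_lb _)] at hs
        have hsk : s ≤ b + (k : ℝ) * h := by
          have : cap (t - h) ≤ max b (t - h) := min_le_left _ _
          have : cap (t - h) ≤ b + (k : ℝ) * h := le_trans this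
            (max_le (by nlinarith [Nat.cast_nonneg (α := ℝ) k]) (by linarith))
          linarith [hs.2]
        have hseg : segc r (Φ (z k)) s = segc r (z k) s := by
          refine ContinuousMap.ext fun θ => ?_
          simp only [segc_apply]
          rw [← hz_succ]
          exact IH (s + θ) (by nlinarith [θ.2.2, θ.2.1])
        simp only [hseg]
  -- choose the number of iterations
  obtain ⟨N, hN⟩ : ∃ N : ℕ, ε + h ≤ N * h := by
    refine ⟨⌈(ε + h) / h⌉₊, ?_⟩
    have := Nat.le_ceil ((ε + h) / h)
    calc ε + h = (ε + h) / h * h := by field_simp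
      _ ≤ ⌈(ε + h) / h⌉₊ * h := mul_le_mul_of_nonneg_right this hh.le
  have heq : ∀ t ∈ Icc b (b + ε),
      z N t = g b + ∫ s in b..(cap (t - h)), f s (segc r (z N) s) := by
    intro t ht
    have hstab : z (N + 1) t = z N t := hz_stab N t (by linarith [ht.2])
    rw [← hstab, hz_succ, hΦ_apply]
    split_ifs with htb
    · have htb' : t = b := le_antisymm htb ht.1
      have hcb : cap (t - h) = b := by
        have h1 : max b (t - h) = b := max_eq_left (by rw [htb']; linarith)
        show min (max b (t - h)) (b + ε) = b
        rw [h1]; exact min_eq_left (by linarith)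
      rw [hcb, intervalIntegral.integral_same, add_zero, htb']
    · rfl
  have hlip : ∀ t₁ ∈ Icc b (b + ε), ∀ t₂ ∈ Icc b (b + ε),
      ‖z N t₁ - z N t₂‖ ≤ K * |t₁ - t₂| := by
    intro t₁ h₁ t₂ h₂
    have hsub : z N t₁ - z N t₂ =
        ∫ s in (cap (t₂ - h))..(cap (t₁ - h)), f s (segc r (z N) s) := by
      rw [heq t₁ h₁, heq t₂ h₂, add_sub_add_left_eq_sub]
      exact intervalIntegral.integral_interval_sub_left (Fint _ _ _) (Fint _ _ _)
    rw [hsub]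
    calc ‖∫ s in (cap (t₂ - h))..(cap (t₁ - h)), f s (segc r (z N) s)‖
        ≤ K * |cap (t₁ - h) - cap (t₂ - h)| :=
          hIest (z N) (hz_bound N) _ _ ⟨hcap_lb _, hcap_ub _⟩ ⟨hcap_lb _, hcap_ub _⟩
      _ ≤ K * |t₁ - t₂| := by
          refine mul_le_mul_of_nonneg_left (le_trans (hcap_dist _ _) ?_) hK
          have : t₁ - h - (t₂ - h) = t₁ - t₂ := by ring
          rw [this]
  exact ⟨z N, hz_prefix N, hz_bound N, hlip, heq⟩

set_option maxHeartbeats 1000000 in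
set_option synthInstance.maxHeartbeats 200000 in
/-- Peano-type existence for the RFDE, by passing to the limit in the Tonelli approximations. -/
theorem peano_core (r : ℝ) (f : ℝ → C(Icc (-r) (0:ℝ), Fin d → ℝ) → (Fin d → ℝ))
    (hf : Continuous fun p : ℝ × C(Icc (-r) (0:ℝ), Fin d → ℝ) => f p.1 p.2)
    (b ε M K : ℝ) (hε : 0 < ε) (hM : 0 ≤ M) (hK : 0 ≤ K) (hKε : K * ε ≤ 1)
    (hfK : ∀ s ∈ Icc b (b + ε), ∀ u : C(Icc (-r) (0:ℝ), Fin d → ℝ),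
      ‖u‖ ≤ M + 1 → ‖f s u‖ ≤ K)
    (g : C(ℝ, Fin d → ℝ)) (hgM : ∀ t, ‖g t‖ ≤ M) :
    ∃ y : C(ℝ, Fin d → ℝ), (∀ t, t ≤ b → y t = g t) ∧ (∀ t, ‖y t‖ ≤ M + 1) ∧
      ∀ t ∈ Icc b (b + ε), y t = g b + ∫ s in b..t, f s (segc r y s) := by
  classical
  have hble : b ≤ b + ε := by linarith
  -- the delays
  set hseq : ℕ → ℝ := fun j => ε * (1 / (j + 1)) with hhseq
  have hseq_pos : ∀ j, 0 < hseq j := fun j => by positivity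
  have hseq_tend : Tendsto hseq atTop (𝓝 0) := by
    have := tendsto_one_div_add_atTop_nhds_zero_nat.const_mul ε
    simpa [hhseq, one_div] using this
  -- the Tonelli approximations
  choose y hy1 hy2 hy3 hy4 using fun j =>
    tonelli r f hf b ε M K hε hM hK hKε hfK g hgM (hseq j) (hseq_pos j)
  -- Arzelà–Ascoli
  set Yb : ℕ → (Icc b (b + ε) →ᵇ (Fin d → ℝ)) := fun j =>
    BoundedContinuousFunction.mkOfCompact ((y j).restrict (Icc b (b + ε))) with hYb
  have hYb_apply : ∀ j (p : Icc b (b + ε)), Yb j p = y j p := fun _ _ => rfl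
  set sball : Set (Fin d → ℝ) := Metric.closedBall 0 (M + 1) with hsball
  have hscompact : IsCompact sball := isCompact_closedBall _ _
  have hin_s : ∀ (u : Icc b (b + ε) →ᵇ (Fin d → ℝ)) (p : Icc b (b + ε)),
      u ∈ Set.range Yb → u p ∈ sball := by
    rintro u p ⟨j, rfl⟩
    rw [hsball, Metric.mem_closedBall, dist_zero_right]
    exact hy2 j p
  have hequi : Equicontinuous ((↑) : Set.range Yb → (Icc b (b + ε)) → (Fin d → ℝ)) := by
    intro p
    rw [Metric.equicontinuousAt_iff]
    intro δ hδ
    have hK1 : (0:ℝ) < K + 1 := by linarith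
    refine ⟨δ / (K + 1), by positivity, fun q hq u => ?_⟩
    obtain ⟨j, hj⟩ := u.2
    have hval : ∀ a : Icc b (b + ε), (u : Icc b (b + ε) → (Fin d → ℝ)) a = y j a := by
      intro a; rw [← hj]; rfl
    have hqd : |(p:ℝ) - q| < δ / (K + 1) := by
      rw [← Real.dist_eq, ← Subtype.dist_eq, dist_comm]; exact hq
    have hfs : (K + 1) * (δ / (K + 1)) = δ := by field_simp
    calc dist ((u : Icc b (b + ε) → (Fin d → ℝ)) p) ((u : Icc b (b + ε) → (Fin d → ℝ)) q)
        = ‖y j p - y j q‖ := by rw [hval q, hval p, dist_eq_norm]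
      _ ≤ K * |(p:ℝ) - q| := hy3 j p p.2 q q.2
      _ ≤ K * (δ / (K + 1)) := mul_le_mul_of_nonneg_left hqd.le hK
      _ < δ := by linarith [div_pos hδ hK1]
  have hA : IsCompact (closure (Set.range Yb)) :=
    BoundedContinuousFunction.arzela_ascoli sball hscompact (Set.range Yb) hin_s hequi
  obtain ⟨Ylim, -, φ, hφ, hconv⟩ :=
    hA.isSeqCompact fun j => subset_closure (Set.mem_range_self j)
  have hd0 : Tendsto (fun l => dist (Yb (φ l)) Ylim) atTop (𝓝 0) :=
    tendsto_iff_dist_tendsto_zero.mp hconv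
  have hpt : ∀ p : Icc b (b + ε),
      Tendsto (fun l => Yb (φ l) p) atTop (𝓝 (Ylim p)) := by
    intro p
    rw [tendsto_iff_dist_tendsto_zero]
    exact squeeze_zero (fun _ => dist_nonneg)
      (fun l => BoundedContinuousFunction.dist_coe_le_dist p) hd0
  have hbmem : b ∈ Icc b (b + ε) := ⟨le_rfl, hble⟩
  have hYlimb : Ylim ⟨b, hbmem⟩ = g b := by
    refine tendsto_nhds_unique (hpt ⟨b, hbmem⟩) ?_
    have : ∀ l, Yb (φ l) ⟨b, hbmem⟩ = g b := fun l => by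
      rw [hYb_apply]; exact hy1 (φ l) b le_rfl
    simp only [this]
    exact tendsto_const_nhds
  -- the limit function
  have hprojc : Continuous fun t : ℝ => (Ylim (projIcc b (b + ε) hble t) : Fin d → ℝ) :=
    Ylim.continuous.comp continuous_projIcc
  set Y : C(ℝ, Fin d → ℝ) :=
    ⟨fun t => if t ≤ b then g t else Ylim (projIcc b (b + ε) hble t), by
      refine Continuous.if_le g.continuous hprojc continuous_id continuous_const
        fun t ht => ?_
      rw [ht, projIcc_left, hYlimb]⟩ with hY
  have hYpre : ∀ t, t ≤ b → Y t = g t := fun t ht => if_pos ht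
  have hYeq : ∀ (t : ℝ) (htm : t ∈ Icc b (b + ε)), Y t = Ylim ⟨t, htm⟩ := by
    intro t htm
    show (if t ≤ b then g t else Ylim (projIcc b (b + ε) hble t)) = _
    split_ifs with htb
    · have : t = b := le_antisymm htb htm.1
      subst this
      exact hYlimb.symm
    · rw [projIcc_of_mem hble htm]
  have hYlim_bound : ∀ p : Icc b (b + ε), ‖Ylim p‖ ≤ M + 1 := by
    intro p
    refine le_of_tendsto (hpt p).norm (Eventually.of_forall fun l => ?_)
    rw [hYb_apply]; exact hy2 (φ l) p
  have hYbound : ∀ t, ‖Y t‖ ≤ M + 1 := by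
    intro t
    by_cases htb : t ≤ b
    · rw [hYpre t htb]; linarith [hgM t]
    · show ‖(if t ≤ b then g t else Ylim (projIcc b (b + ε) hble t))‖ ≤ M + 1
      rw [if_neg htb]
      exact hYlim_bound _
  -- uniform estimates
  have hptle : ∀ l (a : ℝ), a ≤ b + ε → ‖y (φ l) a - Y a‖ ≤ dist (Yb (φ l)) Ylim := by
    intro l a ha
    by_cases hab : a ≤ b
    · rw [hy1 (φ l) a hab, hYpre a hab, sub_self, norm_zero]; exact dist_nonneg
    · have ham : a ∈ Icc b (b + ε) := ⟨(not_le.mp hab).le, ha⟩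
      have h1 : y (φ l) a = Yb (φ l) ⟨a, ham⟩ := (hYb_apply (φ l) ⟨a, ham⟩).symm
      have h2 : Y a = Ylim ⟨a, ham⟩ := hYeq a ham
      rw [h1, h2, ← dist_eq_norm]
      exact BoundedContinuousFunction.dist_coe_le_dist _
  have hsegest : ∀ l (s : ℝ), s ≤ b + ε →
      ‖segc r (y (φ l)) s - segc r Y s‖ ≤ dist (Yb (φ l)) Ylim := by
    intro l s hs
    refine (ContinuousMap.norm_le _ dist_nonneg).2 fun θ => ?_
    rw [ContinuousMap.sub_apply]
    simp only [segc_apply]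
    exact hptle l (s + θ) (by nlinarith [θ.2.2])
  have hsegtend : ∀ s : ℝ, s ≤ b + ε →
      Tendsto (fun l => segc r (y (φ l)) s) atTop (𝓝 (segc r Y s)) := by
    intro s hs
    rw [tendsto_iff_dist_tendsto_zero]
    refine squeeze_zero (fun _ => dist_nonneg) (fun l => ?_) hd0
    rw [dist_eq_norm]; exact hsegest l s hs
  have hFcont : ∀ j, Continuous fun s => f s (segc r (y j) s) := fun j =>
    hf.comp (continuous_id.prodMk (segc r (y j)).continuous)
  have hIest : ∀ j (c₁ c₂ : ℝ), c₁ ∈ Icc b (b + ε) → c₂ ∈ Icc b (b + ε) →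
      ‖∫ s in c₁..c₂, f s (segc r (y j) s)‖ ≤ K * |c₂ - c₁| := by
    intro j c₁ c₂ hc₁ hc₂
    apply intervalIntegral.norm_integral_le_of_norm_le_const
    intro s hs
    rw [Set.mem_uIoc] at hs
    have hsm : s ∈ Icc b (b + ε) := by
      rcases hs with ⟨h1, h2⟩ | ⟨h1, h2⟩
      · exact ⟨le_trans hc₁.1 h1.le, le_trans h2 hc₂.2⟩
      · exact ⟨le_trans hc₂.1 h1.le, le_trans h2 hc₁.2⟩
    exact hfK s hsm _ (norm_segc_le r _ (M + 1) (by linarith) (hy2 j) s)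
  refine ⟨Y, hYpre, hYbound, fun t ht => ?_⟩
  set c : ℕ → ℝ := fun l => min (max b (t - hseq (φ l))) (b + ε) with hc
  have hcmem : ∀ l, c l ∈ Icc b (b + ε) := fun l =>
    ⟨le_min (le_max_left _ _) hble, min_le_right _ _⟩
  have hclet : ∀ l, c l ≤ t := fun l => le_trans (min_le_left _ _)
    (max_le ht.1 (by linarith [(hseq_pos (φ l)).le]))
  have hcget : ∀ l, t - hseq (φ l) ≤ c l := fun l =>
    le_min (le_max_right _ _) (by linarith [ht.2, (hseq_pos (φ l)).le])
  have hL1 : Tendsto (fun l => y (φ l) t) atTop (𝓝 (Y t)) := by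
    rw [tendsto_iff_dist_tendsto_zero]
    refine squeeze_zero (fun _ => dist_nonneg) (fun l => ?_) hd0
    rw [dist_eq_norm]; exact hptle l t ht.2
  have hsplit : ∀ l, y (φ l) t = g b + ((∫ s in b..t, f s (segc r (y (φ l)) s))
      - ∫ s in (c l)..t, f s (segc r (y (φ l)) s)) := by
    intro l
    rw [hy4 (φ l) t ht]
    congr 1
    have hide := intervalIntegral.integral_interval_sub_left
      ((hFcont (φ l)).intervalIntegrable (μ := MeasureTheory.volume) b t)
      ((hFcont (φ l)).intervalIntegrable (μ := MeasureTheory.volume) b (c l))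
    rw [← hide]
    abel
  have hT2 : Tendsto (fun l => ∫ s in (c l)..t, f s (segc r (y (φ l)) s)) atTop (𝓝 0) := by
    have hbnd : ∀ l, ‖∫ s in (c l)..t, f s (segc r (y (φ l)) s)‖ ≤ K * hseq (φ l) := by
      intro l
      refine le_trans (hIest (φ l) (c l) t (hcmem l) ht) ?_
      refine mul_le_mul_of_nonneg_left ?_ hK
      rw [abs_of_nonneg (by linarith [hclet l])]
      linarith [hcget l]
    have hlim0 : Tendsto (fun l => K * hseq (φ l)) atTop (𝓝 0) := by
      have := ((hseq_tend.comp hφ.tendsto_atTop)).const_mul K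
      simpa using this
    exact squeeze_zero_norm hbnd hlim0
  have hT1 : Tendsto (fun l => ∫ s in b..t, f s (segc r (y (φ l)) s)) atTop
      (𝓝 (∫ s in b..t, f s (segc r Y s))) := by
    apply intervalIntegral.tendsto_integral_filter_of_dominated_convergence (fun _ => K)
    · exact Eventually.of_forall fun l => (hFcont (φ l)).aestronglyMeasurable
    · refine Eventually.of_forall fun l => MeasureTheory.ae_of_all _ fun s hs => ?_
      rw [Set.uIoc_of_le ht.1] at hs
      exact hfK s ⟨hs.1.le, le_trans hs.2 ht.2⟩ _
        (norm_segc_le r _ (M + 1) (by linarith) (hy2 (φ l)) s)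
    · exact intervalIntegrable_const
    · refine MeasureTheory.ae_of_all _ fun s hs => ?_
      rw [Set.uIoc_of_le ht.1] at hs
      have hsle : s ≤ b + ε := le_trans hs.2 ht.2
      exact (hf.tendsto (s, segc r Y s)).comp
        (tendsto_const_nhds.prodMk_nhds (hsegtend s hsle))
  have hRHS : Tendsto (fun l => y (φ l) t) atTop
      (𝓝 (g b + ((∫ s in b..t, f s (segc r Y s)) - 0))) := by
    simp only [hsplit]
    exact tendsto_const_nhds.add (hT1.sub hT2)
  have hfin := tendsto_nhds_unique hL1 hRHS
  rw [hfin, sub_zero]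

end Stmt7Aux

open Stmt7Aux MeasureTheory in
set_option maxHeartbeats 1000000 in
set_option synthInstance.maxHeartbeats 200000 in
/-- A noncontinuable solution of an RFDE with quasi-bounded right-hand side and finite
escape time `b` must be unbounded.  Here `X t` plays the role of the segment `x_t`. -/
theorem stmt_7 (d : ℕ) (hd : 0 < d) (r : ℝ) (hr : 0 ≤ r)
    (f : ℝ → C(Icc (-r) (0:ℝ), Fin d → ℝ) → (Fin d → ℝ))
    (hf : Continuous fun p : ℝ × C(Icc (-r) (0:ℝ), Fin d → ℝ) => f p.1 p.2)
    (hqb : ∀ B : Set C(Icc (-r) (0:ℝ), Fin d → ℝ), Bornology.IsBounded B →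
      ∃ M : ℝ, ∀ t ≥ (0:ℝ), ∀ u ∈ B, ‖f t u‖ ≤ M)
    (φ : C(Icc (-r) (0:ℝ), Fin d → ℝ))
    (b : ℝ) (hb : 0 < b)
    (x : ℝ → (Fin d → ℝ)) (X : ℝ → C(Icc (-r) (0:ℝ), Fin d → ℝ))
    (hxc : ContinuousOn x (Ico (-r) b))
    (hX : ∀ t : ℝ, ∀ θ : Icc (-r) (0:ℝ), X t θ = x (t + θ))
    (hinit : X 0 = φ)
    (hsol : ∀ t ∈ Ico (0:ℝ) b, x t = x 0 + ∫ s in (0:ℝ)..t, f s (X s))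
    (hmax : ¬ ∃ b' > b, ∃ x' : ℝ → (Fin d → ℝ),
      ∃ X' : ℝ → C(Icc (-r) (0:ℝ), Fin d → ℝ),
        ContinuousOn x' (Ico (-r) b') ∧
        (∀ t : ℝ, ∀ θ : Icc (-r) (0:ℝ), X' t θ = x' (t + θ)) ∧
        X' 0 = φ ∧
        (∀ t ∈ Ico (0:ℝ) b', x' t = x' 0 + ∫ s in (0:ℝ)..t, f s (X' s)) ∧
        (∀ t ∈ Ico (-r) b, x' t = x t)) :
    ¬ ∃ M : ℝ, ∀ t ∈ Ico (-r) b, ‖x t‖ ≤ M := by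
  rintro ⟨M, hM⟩
  have hrb : -r < b := by linarith
  have h0mem : (0:ℝ) ∈ Ico (-r) b := ⟨by linarith, hb⟩
  have hM0 : 0 ≤ M := le_trans (norm_nonneg _) (hM 0 h0mem)
  -- the quasi-boundedness constant
  obtain ⟨K₀, hK₀⟩ := hqb (Metric.closedBall 0 (M + 1)) Metric.isBounded_closedBall
  set K := max K₀ 0 with hKdef
  have hK : 0 ≤ K := le_max_right _ _
  have hfK : ∀ t : ℝ, 0 ≤ t → ∀ u : C(Icc (-r) (0:ℝ), Fin d → ℝ),
      ‖u‖ ≤ M + 1 → ‖f t u‖ ≤ K := fun t htpos u hu =>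
    le_trans (hK₀ t htpos u (by rwa [Metric.mem_closedBall, dist_zero_right])) (le_max_left _ _)
  -- the segments are bounded
  have hXnorm : ∀ s ∈ Ico (0:ℝ) b, ‖X s‖ ≤ M := by
    intro s hs
    refine (ContinuousMap.norm_le _ hM0).2 fun θ => ?_
    rw [hX s θ]
    exact hM _ ⟨by linarith [θ.2.1, hs.1], by linarith [θ.2.2, hs.2]⟩
  set F : ℝ → (Fin d → ℝ) := fun s => f s (X s) with hFdef
  have hFb : ∀ s ∈ Ico (0:ℝ) b, ‖F s‖ ≤ K := fun s hs =>
    hfK s hs.1 (X s) (le_trans (hXnorm s hs) (by linarith))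
  -- continuity of F on [0, b)
  have hFcont : ContinuousOn F (Ico 0 b) := by
    intro s hs
    set cmid := (s + b) / 2 with hcmid
    have hs2 : s < cmid := by rw [hcmid]; linarith [hs.2]
    have hcb : cmid < b := by rw [hcmid]; linarith [hs.2]
    have hclampc : Continuous fun a : ℝ => x (max (min a cmid) (-r)) := by
      apply hxc.comp_continuous ((continuous_id.min continuous_const).max continuous_const)
      intro a
      exact ⟨le_max_right _ _, max_lt (lt_of_le_of_lt (min_le_right _ _) hcb) hrb⟩
    set xc : C(ℝ, Fin d → ℝ) := ⟨_, hclampc⟩ with hxcdef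
    have hXc : ∀ a ∈ Icc (0:ℝ) cmid, X a = segc r xc a := by
      intro a ha
      refine ContinuousMap.ext fun θ => ?_
      rw [hX a θ, segc_apply]
      show x (a + θ) = x (max (min (a + θ) cmid) (-r))
      rw [min_eq_left (by linarith [θ.2.2, ha.2]), max_eq_left (by linarith [θ.2.1, ha.1])]
    have hGc : Continuous fun a => f a (segc r xc a) :=
      hf.comp (continuous_id.prodMk (segc r xc).continuous)
    refine (hGc.continuousAt.continuousWithinAt).congr_of_eventuallyEq ?_ ?_
    · filter_upwards [nhdsWithin_le_nhds (Iio_mem_nhds hs2), self_mem_nhdsWithin]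
        with a ha1 ha2
      show F a = f a (segc r xc a)
      rw [hFdef]
      show f a (X a) = f a (segc r xc a)
      rw [hXc a ⟨ha2.1, ha1.le⟩]
    · show F s = f s (segc r xc s)
      rw [hFdef]
      show f s (X s) = f s (segc r xc s)
      rw [hXc s ⟨hs.1, hs2.le⟩]
  -- integrability of F on [0, b]
  have hne_b : ∀ᵐ (s : ℝ), s ≠ b := by
    rw [MeasureTheory.ae_iff]
    have : {a : ℝ | ¬a ≠ b} = {b} := by ext a; simp
    rw [this]
    exact measure_singleton b
  have hFintOn : IntegrableOn F (Ioc 0 b) := by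
    rw [IntegrableOn, Measure.restrict_congr_set Ioo_ae_eq_Ioc.symm]
    have hsub : Ioo (0:ℝ) b ⊆ Ico 0 b := Ioo_subset_Ico_self
    have hmeas : AEStronglyMeasurable F (MeasureTheory.volume.restrict (Ioo 0 b)) :=
      (hFcont.mono hsub).aestronglyMeasurable measurableSet_Ioo
    refine Integrable.mono' (g := fun _ => K) ?_ hmeas ?_
    · exact integrableOn_const (hs := measure_Ioo_lt_top.ne)
    · exact (ae_restrict_iff' measurableSet_Ioo).2
        (MeasureTheory.ae_of_all _ fun a ha => hFb a (hsub ha))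
  have hFint : IntervalIntegrable F MeasureTheory.volume 0 b := by
    rw [intervalIntegrable_iff, uIoc_of_le hb.le]
    exact hFintOn
  have hFint' : ∀ t₁ t₂ : ℝ, t₁ ∈ Icc (0:ℝ) b → t₂ ∈ Icc (0:ℝ) b →
      IntervalIntegrable F MeasureTheory.volume t₁ t₂ := by
    intro t₁ t₂ h₁ h₂
    refine hFint.mono_set ?_
    rw [uIcc_of_le hb.le]
    exact uIcc_subset_Icc h₁ h₂
  -- the limit value at b
  set L : Fin d → ℝ := x 0 + ∫ s in (0:ℝ)..b, F s with hLdef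
  have hxL : ∀ t ∈ Ico (0:ℝ) b, ‖x t - L‖ ≤ K * (b - t) := by
    intro t htm
    have h1 : x t - L = ∫ s in b..t, F s := by
      rw [hsol t htm, hLdef]
      have hide := intervalIntegral.integral_interval_sub_left
        (hFint' 0 t ⟨le_rfl, hb.le⟩ ⟨htm.1, htm.2.le⟩)
        (hFint' 0 b ⟨le_rfl, hb.le⟩ ⟨hb.le, le_rfl⟩)
      rw [← hide]
      abel
    rw [h1, intervalIntegral.integral_symm, norm_neg]
    have h2 : ‖∫ s in t..b, F s‖ ≤ |∫ s in t..b, (K : ℝ)| := by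
      refine intervalIntegral.norm_integral_le_abs_of_norm_le ?_ intervalIntegrable_const
      filter_upwards [ae_restrict_mem measurableSet_uIoc,
        MeasureTheory.ae_restrict_of_ae hne_b] with a ha hab
      rw [uIoc_of_le htm.2.le] at ha
      exact hFb a ⟨le_trans htm.1 ha.1.le, lt_of_le_of_ne ha.2 hab⟩
    refine le_trans h2 ?_
    rw [intervalIntegral.integral_const, smul_eq_mul, abs_of_nonneg (by nlinarith [htm.2])]
    rw [mul_comm]
  have hLtend : Tendsto x (𝓝[<] b) (𝓝 L) := by
    rw [tendsto_iff_dist_tendsto_zero]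
    have hev : ∀ᶠ t in 𝓝[<] b, dist (x t) L ≤ K * (b - t) := by
      filter_upwards [Ioo_mem_nhdsLT_of_mem (⟨hb, le_rfl⟩ : b ∈ Ioc 0 b)] with t htI
      rw [dist_eq_norm]
      exact hxL t ⟨htI.1.le, htI.2⟩
    have hK0 : Tendsto (fun t : ℝ => K * (b - t)) (𝓝[<] b) (𝓝 0) := by
      have hcc : Tendsto (fun t : ℝ => K * (b - t)) (𝓝 b) (𝓝 (K * (b - b))) :=
        tendsto_const_nhds.mul (tendsto_const_nhds.sub tendsto_id)
      simpa using hcc.mono_left nhdsWithin_le_nhds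
    exact squeeze_zero' (Eventually.of_forall fun _ => dist_nonneg) hev hK0
  have hLnorm : ‖L‖ ≤ M := by
    refine le_of_tendsto hLtend.norm ?_
    filter_upwards [Ioo_mem_nhdsLT_of_mem (⟨hb, le_rfl⟩ : b ∈ Ioc 0 b)] with t htI
    exact hM t ⟨by linarith [htI.1], htI.2⟩
  -- the global continuous extension of x
  set gfun : ℝ → (Fin d → ℝ) := fun t => if t < b then x (max t (-r)) else L with hgfun
  have hgcont : Continuous gfun := by
    rw [continuous_iff_continuousAt]
    intro t₀
    rcases lt_trichotomy t₀ b with hlt | heqb | hgt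
    · set cmid := (t₀ + b) / 2 with hcmid
      have h1 : t₀ < cmid := by rw [hcmid]; linarith
      have h2 : cmid < b := by rw [hcmid]; linarith
      have hclampc : Continuous fun a : ℝ => x (max (min a cmid) (-r)) := by
        apply hxc.comp_continuous ((continuous_id.min continuous_const).max continuous_const)
        intro a
        exact ⟨le_max_right _ _, max_lt (lt_of_le_of_lt (min_le_right _ _) h2) hrb⟩
      refine hclampc.continuousAt.congr ?_
      filter_upwards [Iio_mem_nhds h1] with a ha
      show x (max (min a cmid) (-r)) = gfun a
      simp only [hgfun]
      have hab : a < b := lt_trans ha h2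
      rw [if_pos hab, min_eq_left ha.le]
    · subst heqb
      have hgb0 : gfun t₀ = L := if_neg (lt_irrefl t₀)
      show ContinuousAt gfun t₀
      unfold ContinuousAt
      rw [hgb0, ← nhdsLT_sup_nhdsGE t₀, tendsto_sup]
      constructor
      · refine hLtend.congr' ?_
        filter_upwards [Ioo_mem_nhdsLT_of_mem (⟨hb, le_rfl⟩ : t₀ ∈ Ioc 0 t₀),
          self_mem_nhdsWithin] with a haI ha2
        show x a = gfun a
        simp only [hgfun]
        rw [if_pos haI.2, max_eq_left (by linarith [haI.1])]
      · refine Tendsto.congr' ?_ tendsto_const_nhds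
        filter_upwards [self_mem_nhdsWithin] with a ha
        exact (if_neg (not_lt.2 ha)).symm
    · refine (continuousAt_const (y := L)).congr ?_
      filter_upwards [Ioi_mem_nhds hgt] with a ha
      show L = gfun a
      simp only [hgfun]
      rw [if_neg (not_lt.2 (le_of_lt ha))]
  set gmap : C(ℝ, Fin d → ℝ) := ⟨gfun, hgcont⟩ with hgmap
  have hgb : gmap b = L := if_neg (lt_irrefl b)
  have hgx : ∀ t ∈ Ico (-r) b, gfun t = x t := by
    intro t ht
    show (if t < b then x (max t (-r)) else L) = x t
    rw [if_pos ht.2, max_eq_left ht.1]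
  have hgM : ∀ t, ‖gmap t‖ ≤ M := by
    intro t
    show ‖(if t < b then x (max t (-r)) else L)‖ ≤ M
    split_ifs with htb
    · exact hM _ ⟨le_max_right _ _, max_lt htb hrb⟩
    · exact hLnorm
  -- the step size
  set ε : ℝ := min 1 (1 / (K + 1)) with hεdef
  have hK1 : (0:ℝ) < K + 1 := by linarith
  have hεpos : 0 < ε := lt_min one_pos (by positivity)
  have hKε : K * ε ≤ 1 := by
    calc K * ε ≤ K * (1 / (K + 1)) :=
          mul_le_mul_of_nonneg_left (min_le_right _ _) hK
      _ ≤ 1 := by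
          rw [mul_one_div]
          exact (div_le_one hK1).mpr (by linarith)
  have hfK2 : ∀ s ∈ Icc b (b + ε), ∀ u : C(Icc (-r) (0:ℝ), Fin d → ℝ),
      ‖u‖ ≤ M + 1 → ‖f s u‖ ≤ K := fun s hs u hu => hfK s (by linarith [hs.1]) u hu
  -- the extension
  obtain ⟨y, hy1, hy2, hy3⟩ := peano_core r f hf b ε M K hεpos hM0 hK hKε hfK2 gmap hgM
  apply hmax
  refine ⟨b + ε, by linarith, y, fun t => segc r y t, y.continuous.continuousOn,
    fun t θ => rfl, ?_, ?_, ?_⟩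
  · -- initial segment
    rw [← hinit]
    refine ContinuousMap.ext fun θ => ?_
    show y (0 + θ) = X 0 θ
    rw [hX 0 θ]
    have hθb : (0:ℝ) + θ ≤ b := by linarith [θ.2.2]
    rw [hy1 (0 + θ) hθb]
    exact hgx (0 + θ) ⟨by linarith [θ.2.1], by linarith [θ.2.2]⟩
  · -- the integral equation
    intro t htm
    have hy0 : y 0 = x 0 := by
      rw [hy1 0 hb.le]
      exact hgx 0 h0mem
    have hsegX : ∀ s ∈ Ico (0:ℝ) b, segc r y s = X s := by
      intro s hs
      refine ContinuousMap.ext fun θ => ?_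
      rw [segc_apply, hX s θ]
      have h1 : s + θ ≤ b := by linarith [θ.2.2, hs.2.le]
      rw [hy1 (s + θ) h1]
      exact hgx (s + θ) ⟨by linarith [θ.2.1, hs.1], by linarith [θ.2.2, hs.2]⟩
    show y t = y 0 + ∫ s in (0:ℝ)..t, f s (segc r y s)
    by_cases htb : t < b
    · have h1 : y t = x t := by
        rw [hy1 t htb.le]
        exact hgx t ⟨by linarith [htm.1], htb⟩
      rw [h1, hy0, hsol t ⟨htm.1, htb⟩]
      congr 1
      refine intervalIntegral.integral_congr fun s hs => ?_
      rw [uIcc_of_le htm.1] at hs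
      rw [hsegX s ⟨hs.1, lt_of_le_of_lt hs.2 htb⟩]
    · push_neg at htb
      have heqt := hy3 t ⟨htb, htm.2.le⟩
      have hcongr : (∫ s in (0:ℝ)..b, F s) = ∫ s in (0:ℝ)..b, f s (segc r y s) := by
        refine intervalIntegral.integral_congr_ae ?_
        filter_upwards [hne_b] with s hsne hsmem
        rw [uIoc_of_le hb.le] at hsmem
        have hsIco : s ∈ Ico (0:ℝ) b := ⟨hsmem.1.le, lt_of_le_of_ne hsmem.2 hsne⟩
        show f s (X s) = f s (segc r y s)
        rw [hsegX s hsIco]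
      have hGint : ∀ a a' : ℝ, IntervalIntegrable (fun s => f s (segc r y s))
          MeasureTheory.volume a a' := fun a a' =>
        (hf.comp (continuous_id.prodMk (segc r y).continuous)).intervalIntegrable a a'
      rw [heqt, hgb, hLdef, hcongr, hy0, add_assoc]
      congr 1
      exact intervalIntegral.integral_add_adjacent_intervals (hGint 0 b) (hGint b t)
  · -- agreement with x on [-r, b)
    intro t htI
    rw [hy1 t htI.2.le]
    exact hgx t htI
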